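/- Let n ≥ 2 and work in T = ℂ[y₀,y₁,…,yₙ]. Let F be either the cubic y₀²y₁ − y₀y₁² or the cubic y₀²y₁, let M be the ideal (y₂,…,yₙ) and let K be the ideal (F, y₂,…,yₙ). Then the ℂ-linear span of the set of products {g·h : g ∈ M₂, h ∈ K₃}, where M₂ is the degree-2 component of M and K₃ is the degree-3 component of K, has dimension C(n+5,5) − 3n − 3 (that is, C(n+5,5) − 6 − 3(n−1)) inside the space T₅ of quintic forms. -/

import Mathlib

open MvPolynomial Finsupp

namespace Stmt8

variable {m : ℕ}

/-- Sum of all coordinates. -/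
def S (d : Fin (m + 3) →₀ ℕ) : ℕ := ∑ i, d i

lemma degree_eq_S (d : Fin (m + 3) →₀ ℕ) : d.degree = S d := by
  rw [Finsupp.degree, S]
  exact Finset.sum_subset (Finset.subset_univ _) (by simp)

lemma fin_cases3 (k : Fin (m + 3)) : k = 0 ∨ k = 1 ∨ 2 ≤ (k : ℕ) := by
  rcases Nat.lt_or_ge (k : ℕ) 2 with h | h
  · interval_cases h' : (k : ℕ)
    · left; exact Fin.ext (by simp [h'])
    · right; left; exact Fin.ext (by simpa using h')
  · right; right; exact h

lemma ne0 {i : Fin (m + 3)} (hi : 2 ≤ (i : ℕ)) : i ≠ 0 := by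
  rintro rfl; simp at hi

lemma ne1 {i : Fin (m + 3)} (hi : 2 ≤ (i : ℕ)) : i ≠ 1 := by
  rintro rfl; simp at hi

/-- the "M"-degree: sum over variables with index ≥ 2 -/
def MS (d : Fin (m + 3) →₀ ℕ) : ℕ := ∑ i ∈ Finset.univ.filter (fun i : Fin (m+3) => 2 ≤ (i : ℕ)), d i

lemma S_split (d : Fin (m + 3) →₀ ℕ) : S d = d 0 + d 1 + MS d := by
  rw [S, MS, ← Finset.sum_filter_add_sum_filter_not Finset.univ (fun i : Fin (m+3) => 2 ≤ (i : ℕ)) d]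
  rw [add_comm]
  congr 1
  have : Finset.univ.filter (fun i : Fin (m+3) => ¬ 2 ≤ (i : ℕ)) = {0, 1} := by
    ext k
    simp only [Finset.mem_filter, Finset.mem_univ, true_and, Finset.mem_insert, Finset.mem_singleton]
    constructor
    · intro h
      rcases fin_cases3 k with h' | h' | h'
      · left; exact h'
      · right; exact h'
      · exact absurd h' h
    · rintro (rfl | rfl) <;> simp
  rw [this, Finset.sum_insert (by simp), Finset.sum_singleton]

lemma MS_eq_zero {d : Fin (m + 3) →₀ ℕ} (h : MS d = 0) {i : Fin (m+3)} (hi : 2 ≤ (i : ℕ)) :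
    d i = 0 := by
  rw [MS, Finset.sum_eq_zero_iff] at h
  exact h i (by simp [hi])

lemma MS_eq_one {d : Fin (m + 3) →₀ ℕ} (h : MS d = 1) :
    ∃ i : Fin (m+3), 2 ≤ (i : ℕ) ∧ d i = 1 ∧ ∀ j : Fin (m+3), 2 ≤ (j : ℕ) → j ≠ i → d j = 0 := by
  classical
  obtain ⟨i, hi, hne⟩ := Finset.exists_ne_zero_of_sum_ne_zero (by rw [← MS] at *; omega :
    ∑ i ∈ Finset.univ.filter (fun i : Fin (m+3) => 2 ≤ (i : ℕ)), d i ≠ 0)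
  simp only [Finset.mem_filter, Finset.mem_univ, true_and] at hi
  have hle : d i ≤ 1 := by
    rw [← h]; exact Finset.single_le_sum (fun j _ => Nat.zero_le _) (by simp [hi])
  have hdi : d i = 1 := by omega
  refine ⟨i, hi, hdi, fun j hj hji => ?_⟩
  have := Finset.add_sum_erase _ d (show i ∈ Finset.univ.filter (fun i : Fin (m+3) => 2 ≤ (i : ℕ)) by simp [hi])
  rw [← MS] at this
  have hz : ∑ k ∈ (Finset.univ.filter (fun i : Fin (m+3) => 2 ≤ (i : ℕ))).erase i, d k = 0 := by
    omega
  rw [Finset.sum_eq_zero_iff] at hz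
  exact hz j (by simp [hj, hji])

lemma MS_ge_two {d : Fin (m + 3) →₀ ℕ} (h : 2 ≤ MS d) :
    ∃ i j : Fin (m+3), 2 ≤ (i : ℕ) ∧ 2 ≤ (j : ℕ) ∧
      Finsupp.single i 1 + Finsupp.single j 1 ≤ d := by
  classical
  obtain ⟨i, hi, hne⟩ := Finset.exists_ne_zero_of_sum_ne_zero (by rw [← MS] at *; omega :
    ∑ i ∈ Finset.univ.filter (fun i : Fin (m+3) => 2 ≤ (i : ℕ)), d i ≠ 0)
  simp only [Finset.mem_filter, Finset.mem_univ, true_and] at hi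
  rcases Nat.lt_or_ge (d i) 2 with hlt | hge
  · -- d i = 1, find another j
    have := Finset.add_sum_erase _ d (show i ∈ Finset.univ.filter (fun i : Fin (m+3) => 2 ≤ (i : ℕ)) by simp [hi])
    rw [← MS] at this
    obtain ⟨j, hj, hjne⟩ := Finset.exists_ne_zero_of_sum_ne_zero
      (by omega : ∑ k ∈ (Finset.univ.filter (fun i : Fin (m+3) => 2 ≤ (i : ℕ))).erase i, d k ≠ 0)
    simp only [Finset.mem_erase, Finset.mem_filter, Finset.mem_univ, true_and] at hj
    refine ⟨i, j, hi, hj.2, ?_⟩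
    intro k
    simp only [Finsupp.add_apply, Finsupp.single_apply]
    rcases eq_or_ne i k with rfl | hik
    · rw [if_pos rfl, if_neg (fun hjk => hj.1 hjk)]
      omega
    · rw [if_neg hik]
      rcases eq_or_ne j k with rfl | hjk
      · rw [if_pos rfl]; omega
      · rw [if_neg hjk]; omega
  · refine ⟨i, i, hi, hi, ?_⟩
    intro k
    simp only [Finsupp.add_apply, Finsupp.single_apply]
    rcases eq_or_ne i k with rfl | hik
    · simp; omega
    · rw [if_neg hik]; omega


/-- exponent vector a·e₀ + b·e₁ + k·eᵢ -/
noncomputable def D (m : ℕ) (a b : ℕ) (i : Fin (m + 3)) (k : ℕ) : Fin (m + 3) →₀ ℕ :=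
  Finsupp.single 0 a + Finsupp.single 1 b + Finsupp.single i k

variable {i i' : Fin (m + 3)} {a b k a' b' k' : ℕ}

lemma D_apply0 (hi : 2 ≤ (i : ℕ)) : D m a b i k 0 = a := by
  simp [D, Finsupp.single_apply, ne0 hi, Ne.symm (ne0 hi), Fin.zero_ne_one (n := m + 2), (Fin.zero_ne_one (n := m + 2)).symm]

lemma D_apply1 (hi : 2 ≤ (i : ℕ)) : D m a b i k 1 = b := by
  simp [D, Finsupp.single_apply, ne1 hi, Ne.symm (ne1 hi), Fin.zero_ne_one (n := m + 2), (Fin.zero_ne_one (n := m + 2)).symm]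

lemma D_applyi (hi : 2 ≤ (i : ℕ)) : D m a b i k i = k := by
  simp [D, Finsupp.single_apply, ne0 hi, ne1 hi, Ne.symm (ne0 hi), Ne.symm (ne1 hi)]

lemma D_apply_other (hi : 2 ≤ (i : ℕ)) {j : Fin (m+3)} (hj : 2 ≤ (j : ℕ)) (hij : j ≠ i) :
    D m a b i k j = 0 := by
  simp [D, Finsupp.single_apply, ne0 hj, ne1 hj, Ne.symm (ne0 hj), Ne.symm (ne1 hj), Ne.symm hij, hij]

lemma S_D (hi : 2 ≤ (i : ℕ)) : S (D m a b i k) = a + b + k := by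
  simp [S, D, Finsupp.single_apply, Finset.sum_add_distrib, Finset.sum_ite_eq]

lemma D_eq_D_iff (hi : 2 ≤ (i : ℕ)) (hi' : 2 ≤ (i' : ℕ)) (hk : k ≠ 0) (hk' : k' ≠ 0) :
    D m a b i k = D m a' b' i' k' ↔ a = a' ∧ b = b' ∧ i = i' ∧ k = k' := by
  constructor
  · intro h
    have h0 := congrArg (fun f : Fin (m+3) →₀ ℕ => f 0) h
    have h1 := congrArg (fun f : Fin (m+3) →₀ ℕ => f 1) h
    simp only [D_apply0 hi, D_apply0 hi', D_apply1 hi, D_apply1 hi'] at h0 h1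
    have hii : i = i' := by
      by_contra hne
      have := congrArg (fun f : Fin (m+3) →₀ ℕ => f i) h
      simp only [D_applyi hi, D_apply_other hi' hi (hne)] at this
      exact hk this
    subst hii
    have hkk := congrArg (fun f : Fin (m+3) →₀ ℕ => f i) h
    simp only [D_applyi hi] at hkk
    exact ⟨h0, h1, rfl, hkk⟩
  · rintro ⟨rfl, rfl, rfl, rfl⟩; rfl

end Stmt8

namespace Stmt8
variable {m : ℕ}

def Wtype (m : ℕ) := {d : Fin (m + 3) →₀ ℕ // S d = 5 ∧ d 0 + d 1 ≤ 3}
def Ctype (m : ℕ) := {d : Fin (m + 3) →₀ ℕ // S d = 5 ∧ 3 < d 0 + d 1}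
def Itype (m : ℕ) := {i : Fin (m + 3) // 2 ≤ (i : ℕ)}

noncomputable def symEquiv : {d : Fin (m + 3) →₀ ℕ // S d = 5} ≃ Sym (Fin (m + 3)) 5 := by
  classical
  exact
  ⟨fun d => ⟨Finsupp.toMultiset d.1, by
      rw [Finsupp.card_toMultiset]
      rw [show (d.1.sum fun _ => id) = Finsupp.degree d.1 from rfl, degree_eq_S, d.2]⟩,
   fun s => ⟨Multiset.toFinsupp s.1, by
      rw [← degree_eq_S]
      have : Finsupp.degree (Multiset.toFinsupp s.1) = Multiset.card s.1 := by
        rw [show Finsupp.degree (Multiset.toFinsupp s.1)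
            = ((Multiset.toFinsupp s.1).sum fun _ => id) from rfl, ← Finsupp.card_toMultiset]
        simp
      rw [this, s.2]⟩,
   fun d => by apply Subtype.ext; simp,
   fun s => by apply Subtype.ext; simp⟩

noncomputable instance : Fintype {d : Fin (m + 3) →₀ ℕ // S d = 5} :=
  Fintype.ofEquiv _ symEquiv.symm

lemma card_S5 : Fintype.card {d : Fin (m + 3) →₀ ℕ // S d = 5} = (m + 7).choose 5 := by
  classical
  rw [Fintype.card_congr symEquiv, Sym.card_sym_eq_choose]
  simp

noncomputable instance : Fintype (Wtype m) := by
  have : Finite (Wtype m) :=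
    Finite.of_injective (fun x : Wtype m => (⟨x.1, x.2.1⟩ : {d : Fin (m + 3) →₀ ℕ // S d = 5}))
      (fun x y h => Subtype.ext (by simpa using congrArg Subtype.val h))
  exact Fintype.ofFinite _

noncomputable instance : Fintype (Ctype m) := by
  have : Finite (Ctype m) :=
    Finite.of_injective (fun x : Ctype m => (⟨x.1, x.2.1⟩ : {d : Fin (m + 3) →₀ ℕ // S d = 5}))
      (fun x y h => Subtype.ext (by simpa using congrArg Subtype.val h))
  exact Fintype.ofFinite _

noncomputable instance : Fintype (Itype m) := by unfold Itype; infer_instance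

def splitEquiv : {d : Fin (m + 3) →₀ ℕ // S d = 5} ≃ Wtype m ⊕ Ctype m where
  toFun d := if h : d.1 0 + d.1 1 ≤ 3 then .inl ⟨d.1, d.2, h⟩ else .inr ⟨d.1, d.2, by omega⟩
  invFun := Sum.elim (fun x => ⟨x.1, x.2.1⟩) (fun x => ⟨x.1, x.2.1⟩)
  left_inv d := by by_cases h : d.1 0 + d.1 1 ≤ 3 <;> simp [h] <;> rfl
  right_inv x := by
    rcases x with x | x
    · simp [x.2.2]; rfl
    · have := x.2.2
      simp [x.2.2, show ¬ (x.1 0 + x.1 1 ≤ 3) by omega]; rfl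

lemma card_split :
    (m + 7).choose 5 = Fintype.card (Wtype m) + Fintype.card (Ctype m) := by
  rw [← card_S5, Fintype.card_congr splitEquiv, Fintype.card_sum]

def itypeEquiv : Itype m ≃ Fin (m + 1) where
  toFun i := ⟨(i.1 : ℕ) - 2, by have := i.1.isLt; have := i.2; omega⟩
  invFun k := ⟨⟨(k : ℕ) + 2, by omega⟩, by simp⟩
  left_inv i := by
    apply Subtype.ext; apply Fin.ext
    have := i.2
    simp
    omega
  right_inv k := by apply Fin.ext; simp

lemma card_Itype : Fintype.card (Itype m) = m + 1 := by
  rw [Fintype.card_congr itypeEquiv, Fintype.card_fin]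

end Stmt8

namespace Stmt8
variable {m : ℕ}

lemma S_add (d e : Fin (m + 3) →₀ ℕ) : S (d + e) = S d + S e := by
  simp [S, Finset.sum_add_distrib]

lemma S_single (j : Fin (m + 3)) (v : ℕ) : S (Finsupp.single j v) = v := by
  simp [S, Finsupp.single_apply, Finset.sum_ite_eq]

lemma zne1 : (0 : Fin (m + 3)) ≠ 1 := by exact Fin.ne_of_val_ne (by simp)

noncomputable def compFun : (Fin 6 ⊕ Fin 5 × Itype m) → Ctype m :=
  fun x => match x with
  | .inl a => ⟨Finsupp.single 0 (a : ℕ) + Finsupp.single 1 (5 - (a : ℕ)),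
      by
        have ha := a.isLt
        constructor
        · rw [S_add, S_single, S_single]; omega
        · simp [Finsupp.single_apply, zne1 (m := m), (zne1 (m := m)).symm]
          omega⟩
  | .inr (a, i) => ⟨D m (a : ℕ) (4 - (a : ℕ)) i.1 1,
      by
        have ha := a.isLt
        have hi := i.2
        constructor
        · rw [S_D hi]; omega
        · rw [D_apply0 hi, D_apply1 hi]; omega⟩

lemma compFun_bij : Function.Bijective (compFun (m := m)) := by
  constructor
  · rintro (a | ⟨a, i⟩) (a' | ⟨a', i'⟩) h
    · have h0 := congrArg (fun x : Ctype m => x.1 0) h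
      simp only [compFun, Finsupp.add_apply, Finsupp.single_eq_same,
        Finsupp.single_eq_of_ne' (zne1 (m := m)).symm] at h0
      congr 1
      exact Fin.ext (by omega)
    · exfalso
      have hi := i'.2
      have h0 := congrArg (fun x : Ctype m => x.1 i'.1) h
      simp only [compFun, Finsupp.add_apply, D_applyi hi,
        Finsupp.single_apply, ne0 hi, ne1 hi] at h0
      rw [if_neg (Ne.symm (ne0 hi)), if_neg (Ne.symm (ne1 hi))] at h0
      simp at h0
    · exfalso
      have hi := i.2
      have h0 := congrArg (fun x : Ctype m => x.1 i.1) h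
      simp only [compFun, Finsupp.add_apply, D_applyi hi,
        Finsupp.single_apply] at h0
      rw [if_neg (Ne.symm (ne0 hi)), if_neg (Ne.symm (ne1 hi))] at h0
      simp at h0
    · have := congrArg (fun x : Ctype m => x.1) h
      simp only [compFun] at this
      rw [D_eq_D_iff i.2 i'.2 one_ne_zero one_ne_zero] at this
      obtain ⟨h1, -, h3, -⟩ := this
      congr 1
      exact Prod.ext (Fin.ext h1) (Subtype.ext h3)
  · rintro ⟨d, hS, hd⟩
    have hsplit := S_split d
    rw [hS] at hsplit
    have hms : MS d ≤ 1 := by omega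
    interval_cases hms' : MS d
    · -- d 0 + d 1 = 5
      have h01 : d 0 + d 1 = 5 := by omega
      refine ⟨.inl ⟨d 0, by omega⟩, Subtype.ext ?_⟩
      simp only [compFun]
      ext j
      rcases fin_cases3 j with rfl | rfl | hj
      · simp [Finsupp.single_apply, zne1 (m := m), (zne1 (m := m)).symm]
      · simp [Finsupp.single_apply, zne1 (m := m), (zne1 (m := m)).symm]
        omega
      · rw [Finsupp.add_apply, Finsupp.single_eq_of_ne' (ne0 hj).symm,
          Finsupp.single_eq_of_ne' (ne1 hj).symm, MS_eq_zero hms' hj]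
        simp
    · -- d 0 + d 1 = 4
      have h01 : d 0 + d 1 = 4 := by omega
      obtain ⟨i, hi, hdi, hother⟩ := MS_eq_one hms'
      refine ⟨.inr ⟨⟨d 0, by omega⟩, ⟨i, hi⟩⟩, Subtype.ext ?_⟩
      simp only [compFun]
      ext j
      rcases fin_cases3 j with rfl | rfl | hj
      · rw [D_apply0 hi]
      · rw [D_apply1 hi]; omega
      · rcases eq_or_ne j i with rfl | hji
        · rw [D_applyi hi, hdi]
        · rw [D_apply_other hi hj hji, hother j hj hji]

lemma card_Ctype : Fintype.card (Ctype m) = 5 * m + 11 := by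
  classical
  rw [← Fintype.card_of_bijective (compFun_bij (m := m))]
  simp [card_Itype]
  ring

lemma card_Wtype : Fintype.card (Wtype m) + (5 * m + 11) = (m + 7).choose 5 := by
  rw [← card_Ctype, ← card_split]

end Stmt8

namespace Stmt8
variable {m : ℕ}

lemma support_S {g : MvPolynomial (Fin (m + 3)) ℂ} {k : ℕ} (hg : g.IsHomogeneous k)
    {e : Fin (m + 3) →₀ ℕ} (he : e ∈ g.support) : S e = k := by
  rw [← degree_eq_S, Finsupp.degree_eq_weight_one]
  exact hg (MvPolynomial.mem_support_iff.mp he)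

def XS (m : ℕ) : Set (MvPolynomial (Fin (m + 3)) ℂ) :=
  {p | ∃ i : Fin (m + 3), 2 ≤ (i : ℕ) ∧ p = X i}

lemma XS_eq : XS m = MvPolynomial.X '' {i : Fin (m + 3) | 2 ≤ (i : ℕ)} := by
  ext p; simp [XS, Set.mem_image, eq_comm]

lemma mem_MI {p : MvPolynomial (Fin (m + 3)) ℂ} :
    p ∈ Ideal.span (XS m) ↔ ∀ e ∈ p.support, ∃ i : Fin (m + 3), 2 ≤ (i : ℕ) ∧ e i ≠ 0 := by
  rw [XS_eq, mem_ideal_span_X_image]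
  simp

abbrev famI (m : ℕ) := Wtype m ⊕ Itype m × Bool

noncomputable def fam (m : ℕ) (c : ℂ) : famI m → MvPolynomial (Fin (m + 3)) ℂ :=
  fun x => match x with
  | .inl d => monomial d.1 1
  | .inr (i, false) => monomial (D m 3 1 i.1 1) 1 - monomial (D m 2 2 i.1 1) c
  | .inr (i, true) => monomial (D m 2 2 i.1 1) 1 - monomial (D m 1 3 i.1 1) c

lemma D_ne_W {d : Wtype m} {a b : ℕ} {i : Fin (m + 3)} (hab : a + b = 4) (hi : 2 ≤ (i : ℕ)) :
    D m a b i 1 ≠ d.1 := by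
  intro h
  have h0 := congrArg (fun f : Fin (m + 3) →₀ ℕ => f 0) h
  have h1 := congrArg (fun f : Fin (m + 3) →₀ ℕ => f 1) h
  simp only [D_apply0 hi, D_apply1 hi] at h0 h1
  have := d.2.2
  omega

lemma D_ne {i i' : Fin (m + 3)} {a b a' b' : ℕ} (hi : 2 ≤ (i : ℕ)) (hi' : 2 ≤ (i' : ℕ))
    (h : a ≠ a' ∨ b ≠ b') : D m a b i 1 ≠ D m a' b' i' 1 := by
  intro hh
  rw [D_eq_D_iff hi hi' one_ne_zero one_ne_zero] at hh
  tauto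

lemma D_ne_idx {i i' : Itype m} {a b : ℕ} (hne : i' ≠ i) :
    D m a b i'.1 1 ≠ D m a b i.1 1 := fun hh =>
  hne (Subtype.ext (((D_eq_D_iff i'.2 i.2 one_ne_zero one_ne_zero).mp hh).2.2.1))

lemma fam_indep (c : ℂ) : LinearIndependent ℂ (fam m c) := by
  classical
  rw [Fintype.linearIndependent_iff]
  intro g hg
  have hcoeff : ∀ e : Fin (m + 3) →₀ ℕ, ∑ x : famI m, g x * coeff e (fam m c x) = 0 := by
    intro e
    have h := congrArg (coeff e) hg
    rw [coeff_sum] at h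
    simpa [coeff_smul, smul_eq_mul] using h
  have hW : ∀ d : Wtype m, g (.inl d) = 0 := by
    intro d
    have h := hcoeff d.1
    rw [Fintype.sum_sum_type] at h
    have h2 : ∑ p : Itype m × Bool, g (.inr p) * coeff d.1 (fam m c (.inr p)) = 0 := by
      apply Finset.sum_eq_zero
      rintro ⟨i, j⟩ -
      cases j
      · simp only [fam, coeff_sub, coeff_monomial,
          if_neg (D_ne_W (a := 3) (b := 1) (by norm_num) i.2),
          if_neg (D_ne_W (a := 2) (b := 2) (by norm_num) i.2)]
        simp
      · simp only [fam, coeff_sub, coeff_monomial,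
          if_neg (D_ne_W (a := 2) (b := 2) (by norm_num) i.2),
          if_neg (D_ne_W (a := 1) (b := 3) (by norm_num) i.2)]
        simp
    have h1 : ∀ d' : Wtype m, g (.inl d') * coeff d.1 (fam m c (.inl d')) =
        if d' = d then g (.inl d') else 0 := by
      intro d'
      simp only [fam, coeff_monomial]
      rcases eq_or_ne d' d with rfl | hne
      · simp
      · rw [if_neg (fun hh => hne (Subtype.ext hh)), if_neg hne, mul_zero]
    rw [Finset.sum_congr rfl (fun d' _ => h1 d'), Finset.sum_ite_eq' Finset.univ d, h2] at h
    simpa using h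
  have hinl : ∀ e : Fin (m + 3) →₀ ℕ,
      ∑ d' : Wtype m, g (.inl d') * coeff e (fam m c (.inl d')) = 0 :=
    fun e => Finset.sum_eq_zero (fun d' _ => by rw [hW d', zero_mul])
  have hfalse : ∀ i : Itype m, g (.inr (i, false)) = 0 := by
    intro i
    have h := hcoeff (D m 3 1 i.1 1)
    rw [Fintype.sum_sum_type, hinl, Fintype.sum_prod_type] at h
    have h1 : ∀ i' : Itype m, ∑ j : Bool, g (.inr (i', j)) * coeff (D m 3 1 i.1 1) (fam m c (.inr (i', j)))
        = if i' = i then g (.inr (i, false)) else 0 := by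
      intro i'
      rw [Fintype.sum_bool]
      rcases eq_or_ne i' i with rfl | hne
      · simp only [fam, coeff_sub, coeff_monomial, if_pos rfl,
          if_neg (D_ne (a := 2) (b := 2) (a' := 3) (b' := 1) i'.2 i'.2 (Or.inl (by norm_num))),
          if_neg (D_ne (a := 1) (b := 3) (a' := 3) (b' := 1) i'.2 i'.2 (Or.inl (by norm_num)))]
        simp
      · simp only [fam, coeff_sub, coeff_monomial,
          if_neg (D_ne_idx hne),
          if_neg (D_ne (a := 2) (b := 2) (a' := 3) (b' := 1) i'.2 i.2 (Or.inl (by norm_num))),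
          if_neg (D_ne (a := 1) (b := 3) (a' := 3) (b' := 1) i'.2 i.2 (Or.inl (by norm_num))),
          if_neg hne]
        simp
    rw [Finset.sum_congr rfl (fun i' _ => h1 i'), Finset.sum_ite_eq' Finset.univ i] at h
    simpa using h
  have htrue : ∀ i : Itype m, g (.inr (i, true)) = 0 := by
    intro i
    have h := hcoeff (D m 2 2 i.1 1)
    rw [Fintype.sum_sum_type, hinl, Fintype.sum_prod_type] at h
    have h1 : ∀ i' : Itype m, ∑ j : Bool, g (.inr (i', j)) * coeff (D m 2 2 i.1 1) (fam m c (.inr (i', j)))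
        = if i' = i then g (.inr (i, true)) else 0 := by
      intro i'
      rw [Fintype.sum_bool]
      rcases eq_or_ne i' i with rfl | hne
      · simp only [fam, coeff_sub, coeff_monomial, if_pos rfl,
          if_neg (D_ne (a := 3) (b := 1) (a' := 2) (b' := 2) i'.2 i'.2 (Or.inl (by norm_num))),
          if_neg (D_ne (a := 1) (b := 3) (a' := 2) (b' := 2) i'.2 i'.2 (Or.inl (by norm_num)))]
        rw [hfalse i']
        simp
      · simp only [fam, coeff_sub, coeff_monomial,
          if_neg (D_ne_idx hne),
          if_neg (D_ne (a := 3) (b := 1) (a' := 2) (b' := 2) i'.2 i.2 (Or.inl (by norm_num))),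
          if_neg (D_ne (a := 1) (b := 3) (a' := 2) (b' := 2) i'.2 i.2 (Or.inl (by norm_num))),
          if_neg hne]
        simp
    rw [Finset.sum_congr rfl (fun i' _ => h1 i'), Finset.sum_ite_eq' Finset.univ i] at h
    simpa using h
  rintro (d | ⟨i, j⟩)
  · exact hW d
  · cases j
    · exact hfalse i
    · exact htrue i

end Stmt8

namespace Stmt8
variable {m : ℕ}

noncomputable def E1 (m : ℕ) : Fin (m + 3) →₀ ℕ := Finsupp.single 0 2 + Finsupp.single 1 1
noncomputable def E2 (m : ℕ) : Fin (m + 3) →₀ ℕ := Finsupp.single 0 1 + Finsupp.single 1 2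

noncomputable def Fc (m : ℕ) (c : ℂ) : MvPolynomial (Fin (m + 3)) ℂ :=
  X 0 ^ 2 * X 1 - C c * (X 0 * X 1 ^ 2)

lemma Fc_eq (c : ℂ) : Fc m c = monomial (E1 m) 1 - monomial (E2 m) c := by
  rw [Fc, E1, E2]
  rw [X_pow_eq_monomial, X_pow_eq_monomial, X, X, C_apply, monomial_mul, monomial_mul,
    monomial_mul]
  simp

lemma S_E1 : S (E1 m) = 3 := by rw [E1, S_add, S_single, S_single]
lemma S_E2 : S (E2 m) = 3 := by rw [E2, S_add, S_single, S_single]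

lemma E1_apply0 : E1 m 0 = 2 := by
  simp [E1, Finsupp.single_apply, (zne1 (m := m)).symm]
lemma E1_apply1 : E1 m 1 = 1 := by
  simp [E1, Finsupp.single_apply, zne1 (m := m)]
lemma E2_apply0 : E2 m 0 = 1 := by
  simp [E2, Finsupp.single_apply, (zne1 (m := m)).symm]
lemma E2_apply1 : E2 m 1 = 2 := by
  simp [E2, Finsupp.single_apply, zne1 (m := m)]

lemma add_E1_0 (i : Fin (m + 3)) :
    (Finsupp.single i 1 + Finsupp.single 0 1) + E1 m = D m 3 1 i 1 := by
  ext j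
  simp only [D, E1, Finsupp.add_apply, Finsupp.single_apply]
  split_ifs <;> omega

lemma add_E2_0 (i : Fin (m + 3)) :
    (Finsupp.single i 1 + Finsupp.single 0 1) + E2 m = D m 2 2 i 1 := by
  ext j
  simp only [D, E2, Finsupp.add_apply, Finsupp.single_apply]
  split_ifs <;> omega

lemma add_E1_1 (i : Fin (m + 3)) :
    (Finsupp.single i 1 + Finsupp.single 1 1) + E1 m = D m 2 2 i 1 := by
  ext j
  simp only [D, E1, Finsupp.add_apply, Finsupp.single_apply]
  split_ifs <;> omega

lemma add_E2_1 (i : Fin (m + 3)) :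
    (Finsupp.single i 1 + Finsupp.single 1 1) + E2 m = D m 1 3 i 1 := by
  ext j
  simp only [D, E2, Finsupp.add_apply, Finsupp.single_apply]
  split_ifs <;> omega

lemma fam_inr_false (c : ℂ) (i : Itype m) :
    fam m c (.inr (i, false)) = (X i.1 * X 0) * Fc m c := by
  rw [Fc_eq, fam]
  rw [show (X i.1 * X 0 : MvPolynomial (Fin (m + 3)) ℂ)
      = monomial (Finsupp.single i.1 1 + Finsupp.single 0 1) 1 by
    rw [X, X, monomial_mul]; norm_num]
  rw [mul_sub, monomial_mul, monomial_mul, add_E1_0, add_E2_0]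
  norm_num

lemma fam_inr_true (c : ℂ) (i : Itype m) :
    fam m c (.inr (i, true)) = (X i.1 * X 1) * Fc m c := by
  rw [Fc_eq, fam]
  rw [show (X i.1 * X 1 : MvPolynomial (Fin (m + 3)) ℂ)
      = monomial (Finsupp.single i.1 1 + Finsupp.single 1 1) 1 by
    rw [X, X, monomial_mul]; norm_num]
  rw [mul_sub, monomial_mul, monomial_mul, add_E1_1, add_E2_1]
  norm_num

lemma S_zero_eq (d : Fin (m + 3) →₀ ℕ) (h : S d = 0) : d = 0 := by
  rw [S, Finset.sum_eq_zero_iff] at h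
  ext j
  exact h j (Finset.mem_univ j)

end Stmt8

namespace Stmt8
variable {m : ℕ}

def PSet (m : ℕ) (c : ℂ) : Set (MvPolynomial (Fin (m + 3)) ℂ) :=
  {p | ∃ g ∈ Submodule.restrictScalars ℂ (Ideal.span (XS m)) ⊓
        homogeneousSubmodule (Fin (m + 3)) ℂ 2,
      ∃ h ∈ Submodule.restrictScalars ℂ (Ideal.span ({Fc m c} ∪ XS m)) ⊓
        homogeneousSubmodule (Fin (m + 3)) ℂ 3,
      p = g * h}

lemma monW_mem (c : ℂ) {p : MvPolynomial (Fin (m + 3)) ℂ}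
    (hp : ∀ e ∈ p.support, S e = 5 ∧ e 0 + e 1 ≤ 3) :
    p ∈ Submodule.span ℂ (Set.range (fam m c)) := by
  rw [as_sum p]
  apply Submodule.sum_mem
  intro e he
  have : (monomial e) (coeff e p) = coeff e p • (monomial e) (1 : ℂ) := by
    rw [smul_monomial, smul_eq_mul, mul_one]
  rw [this]
  exact Submodule.smul_mem _ _ (Submodule.subset_span ⟨.inl ⟨e, hp e he⟩, rfl⟩)

lemma exists_split {d : Fin (m + 3) →₀ ℕ} (hd : S d = 5) (h01 : d 0 + d 1 ≤ 3) :
    ∃ a b : Fin (m + 3) →₀ ℕ, a + b = d ∧ S a = 2 ∧ S b = 3 ∧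
      (∃ i : Fin (m + 3), 2 ≤ (i : ℕ) ∧ a i ≠ 0) ∧
      (∃ j : Fin (m + 3), 2 ≤ (j : ℕ) ∧ b j ≠ 0) := by
  have hms : 2 ≤ MS d := by have := S_split d; omega
  obtain ⟨i, j, hi, hj, hle⟩ := MS_ge_two hms
  set e := d - (Finsupp.single i 1 + Finsupp.single j 1) with he
  have hde : (Finsupp.single i 1 + Finsupp.single j 1) + e = d :=
    add_tsub_cancel_of_le hle
  have hSe : S e = 3 := by
    have h2 := S_add (Finsupp.single i 1 + Finsupp.single j 1) e
    rw [hde, S_add, S_single, S_single] at h2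
    omega
  have hene : e ≠ 0 := fun h => by rw [h] at hSe; simp [S] at hSe
  obtain ⟨k, hk⟩ : ∃ k, e k ≠ 0 := by
    by_contra hcon
    push_neg at hcon
    exact hene (Finsupp.ext hcon)
  have hk1 : Finsupp.single k 1 ≤ e := Finsupp.single_le_iff.mpr (by omega)
  have h1 : Finsupp.single k 1 + (e - Finsupp.single k 1) = e := add_tsub_cancel_of_le hk1
  refine ⟨Finsupp.single i 1 + Finsupp.single k 1,
    Finsupp.single j 1 + (e - Finsupp.single k 1), ?_, ?_, ?_, ⟨i, hi, ?_⟩, ⟨j, hj, ?_⟩⟩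
  · conv_rhs => rw [← hde, ← h1]
    rw [add_add_add_comm]
  · rw [S_add, S_single, S_single]
  · have h2 := S_add (Finsupp.single k 1) (e - Finsupp.single k 1)
    rw [h1, S_single] at h2
    rw [S_add, S_single]
    omega
  · intro hcon
    rw [Finsupp.add_apply, Finsupp.single_eq_same] at hcon
    omega
  · intro hcon
    rw [Finsupp.add_apply, Finsupp.single_eq_same] at hcon
    omega

lemma mon_mem_MI {d : Fin (m + 3) →₀ ℕ} {r : ℂ} (hr : r ≠ 0)
    (h : ∃ i : Fin (m + 3), 2 ≤ (i : ℕ) ∧ d i ≠ 0) :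
    (monomial d r : MvPolynomial (Fin (m + 3)) ℂ) ∈ Ideal.span (XS m) := by
  rw [mem_MI]
  intro e he
  rw [support_monomial, if_neg hr, Finset.mem_singleton] at he
  subst he
  exact h

lemma Fc_homog (c : ℂ) : (Fc m c).IsHomogeneous 3 := by
  rw [Fc_eq]
  apply IsHomogeneous.sub
  · exact isHomogeneous_monomial _ (by rw [degree_eq_S, S_E1])
  · exact isHomogeneous_monomial _ (by rw [degree_eq_S, S_E2])

lemma Fc_mem_K (c : ℂ) : Fc m c ∈ Ideal.span ({Fc m c} ∪ XS m) :=
  Ideal.subset_span (Set.mem_union_left _ rfl)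

lemma range_sub (c : ℂ) : Set.range (fam m c) ⊆ PSet m c := by
  rintro - ⟨x, rfl⟩
  rcases x with d | ⟨i, j⟩
  · obtain ⟨a, b, hab, hSa, hSb, hia, hjb⟩ := exists_split d.2.1 d.2.2
    refine ⟨monomial a 1, Submodule.mem_inf.mpr ⟨?_, ?_⟩,
            monomial b 1, Submodule.mem_inf.mpr ⟨?_, ?_⟩, ?_⟩
    · exact (Submodule.restrictScalars_mem _ _ _).mpr (mon_mem_MI one_ne_zero hia)
    · exact (mem_homogeneousSubmodule _ _).mpr
        (isHomogeneous_monomial _ (by rw [degree_eq_S, hSa]))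
    · exact (Submodule.restrictScalars_mem _ _ _).mpr
        (Ideal.span_mono Set.subset_union_right (mon_mem_MI one_ne_zero hjb))
    · exact (mem_homogeneousSubmodule _ _).mpr
        (isHomogeneous_monomial _ (by rw [degree_eq_S, hSb]))
    · show monomial d.1 (1 : ℂ) = _
      rw [monomial_mul, mul_one, hab]
  · have hg2 : ∀ jj : Fin (m + 3), ((X i.1 * X jj : MvPolynomial (Fin (m + 3)) ℂ)).IsHomogeneous 2 := by
      intro jj
      have := (isHomogeneous_X ℂ i.1).mul (isHomogeneous_X ℂ jj)
      norm_num at this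
      exact this
    have hgM : ∀ jj : Fin (m + 3), (X i.1 * X jj : MvPolynomial (Fin (m + 3)) ℂ) ∈ Ideal.span (XS m) :=
      fun jj => Ideal.mul_mem_right _ _ (Ideal.subset_span ⟨i.1, i.2, rfl⟩)
    have hFcK : Fc m c ∈ Submodule.restrictScalars ℂ (Ideal.span ({Fc m c} ∪ XS m)) ⊓
        homogeneousSubmodule (Fin (m + 3)) ℂ 3 :=
      Submodule.mem_inf.mpr ⟨(Submodule.restrictScalars_mem _ _ _).mpr (Fc_mem_K c),
        (mem_homogeneousSubmodule _ _).mpr (Fc_homog c)⟩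
    cases j
    · exact ⟨X i.1 * X 0, Submodule.mem_inf.mpr
        ⟨(Submodule.restrictScalars_mem _ _ _).mpr (hgM 0),
         (mem_homogeneousSubmodule _ _).mpr (hg2 0)⟩,
        Fc m c, hFcK, fam_inr_false c i⟩
    · exact ⟨X i.1 * X 1, Submodule.mem_inf.mpr
        ⟨(Submodule.restrictScalars_mem _ _ _).mpr (hgM 1),
         (mem_homogeneousSubmodule _ _).mpr (hg2 1)⟩,
        Fc m c, hFcK, fam_inr_true c i⟩

lemma HC5_mul_monomial (q : MvPolynomial (Fin (m + 3)) ℂ) (t : Fin (m + 3) →₀ ℕ) (r : ℂ)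
    (ht : S t = 3) :
    homogeneousComponent 5 (q * monomial t r) = homogeneousComponent 2 q * monomial t r := by
  ext d
  rw [coeff_homogeneousComponent, coeff_mul_monomial', coeff_mul_monomial',
    coeff_homogeneousComponent]
  by_cases hle : t ≤ d
  · rw [if_pos hle, if_pos hle]
    have hS : S (d - t) + 3 = S d := by
      have h2 := S_add (d - t) t
      rw [tsub_add_cancel_of_le hle] at h2
      omega
    rw [degree_eq_S, degree_eq_S]
    by_cases h5 : S d = 5
    · rw [if_pos h5, if_pos (by omega)]
    · rw [if_neg h5, if_neg (by omega), zero_mul]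
  · rw [if_neg hle, if_neg hle, ite_self]

lemma HC2_mul {g : MvPolynomial (Fin (m + 3)) ℂ} (p : MvPolynomial (Fin (m + 3)) ℂ)
    (hg : g.IsHomogeneous 2) :
    homogeneousComponent 2 (g * p) = g * C (coeff 0 p) := by
  classical
  have hsplit : g * p = g * C (coeff 0 p) + g * (p - C (coeff 0 p)) := by ring
  rw [hsplit, map_add]
  have h1 : homogeneousComponent 2 (g * C (coeff 0 p)) = g * C (coeff 0 p) := by
    have hmul := hg.mul (isHomogeneous_C _ (coeff 0 p))
    norm_num at hmul
    rw [homogeneousComponent_of_mem ((mem_homogeneousSubmodule _ _).mpr hmul)]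
    simp
  have h2 : homogeneousComponent 2 (g * (p - C (coeff 0 p))) = 0 := by
    apply homogeneousComponent_eq_zero'
    intro d hd
    have hd' := MvPolynomial.support_mul _ _ hd
    rw [Finset.mem_add] at hd'
    obtain ⟨a, ha, b, hb, rfl⟩ := hd'
    have hSa : S a = 2 := support_S hg ha
    have hb0 : b ≠ 0 := by
      rintro rfl
      rw [MvPolynomial.mem_support_iff] at hb
      simp [coeff_sub, coeff_zero_C] at hb
    have hSb : S b ≠ 0 := fun h => hb0 (S_zero_eq b h)
    rw [degree_eq_S, S_add]
    omega
  rw [h1, h2, add_zero]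

lemma eq_single_add_single {e : Fin (m + 3) →₀ ℕ} {i' j : Fin (m + 3)}
    (hi' : 2 ≤ (i' : ℕ)) (hj : (j : ℕ) < 2)
    (h1 : e i' = 1) (hj1 : e j = 1) (hz : ∀ k, k ≠ i' → k ≠ j → e k = 0) :
    e = Finsupp.single i' 1 + Finsupp.single j 1 := by
  ext k
  rw [Finsupp.add_apply, Finsupp.single_apply, Finsupp.single_apply]
  rcases eq_or_ne i' k with rfl | h1k
  · rw [if_pos rfl, if_neg (by rintro rfl; omega), h1]
    omega
  · rw [if_neg h1k]
    rcases eq_or_ne j k with rfl | hjk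
    · rw [if_pos rfl, hj1]
    · rw [if_neg hjk, hz k (Ne.symm h1k) (Ne.symm hjk)]
      omega

lemma gF_mem (c : ℂ) {g : MvPolynomial (Fin (m + 3)) ℂ}
    (hgM : g ∈ Ideal.span (XS m)) (hg2 : g.IsHomogeneous 2) :
    g * Fc m c ∈ Submodule.span ℂ (Set.range (fam m c)) := by
  classical
  have hrw : g * Fc m c = ∑ e ∈ g.support, (monomial e) (coeff e g) * Fc m c := by
    rw [← Finset.sum_mul, ← as_sum g]
  rw [hrw]
  apply Submodule.sum_mem
  intro e he
  have hSe : S e = 2 := support_S hg2 he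
  obtain ⟨i, hi, hei⟩ := mem_MI.mp hgM e he
  have hMSe : 1 ≤ MS e := by
    rw [MS]
    calc 1 ≤ e i := by omega
    _ ≤ _ := Finset.single_le_sum (fun j _ => Nat.zero_le _) (by simp [hi])
  have he01 : e 0 + e 1 ≤ 1 := by have := S_split e; omega
  have hexp : (monomial e) (coeff e g) * Fc m c
      = monomial (e + E1 m) (coeff e g) - monomial (e + E2 m) (coeff e g * c) := by
    rw [Fc_eq, mul_sub, monomial_mul, monomial_mul, mul_one]
  rcases Nat.eq_zero_or_pos (e 0 + e 1) with h01 | h01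
  · -- both exponents are W monomials
    rw [hexp]
    apply Submodule.sub_mem
    · have hmem : (e + E1 m) ∈ {d : Fin (m + 3) →₀ ℕ | S d = 5 ∧ d 0 + d 1 ≤ 3} := by
        constructor
        · rw [S_add, hSe, S_E1]
        · rw [Finsupp.add_apply, Finsupp.add_apply, E1_apply0, E1_apply1]; omega
      have : (monomial (e + E1 m)) (coeff e g) = coeff e g • (monomial (e + E1 m)) (1 : ℂ) := by
        rw [smul_monomial, smul_eq_mul, mul_one]
      rw [this]
      exact Submodule.smul_mem _ _
        (Submodule.subset_span ⟨.inl ⟨e + E1 m, hmem.1, hmem.2⟩, rfl⟩)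
    · have hmem : S (e + E2 m) = 5 ∧ (e + E2 m) 0 + (e + E2 m) 1 ≤ 3 := by
        constructor
        · rw [S_add, hSe, S_E2]
        · rw [Finsupp.add_apply, Finsupp.add_apply, E2_apply0, E2_apply1]; omega
      have : (monomial (e + E2 m)) (coeff e g * c) = (coeff e g * c) • (monomial (e + E2 m)) (1 : ℂ) := by
        rw [smul_monomial, smul_eq_mul, mul_one]
      rw [this]
      exact Submodule.smul_mem _ _
        (Submodule.subset_span ⟨.inl ⟨e + E2 m, hmem.1, hmem.2⟩, rfl⟩)
  · -- exactly one of e 0, e 1 is 1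
    have hMS1 : MS e = 1 := by have := S_split e; omega
    obtain ⟨i', hi', hei', hother⟩ := MS_eq_one hMS1
    rcases Nat.eq_zero_or_pos (e 0) with he0 | he0
    · -- e = single i' 1 + single 1 1
      have heq : e = Finsupp.single i' 1 + Finsupp.single 1 1 := by
        refine eq_single_add_single hi' (by simp) hei' (by omega) ?_
        intro k hk1 hk2
        rcases fin_cases3 k with rfl | rfl | hk
        · exact he0
        · exact absurd rfl hk2
        · exact hother k hk hk1
      have : (monomial e) (coeff e g) * Fc m c = coeff e g • fam m c (.inr (⟨i', hi'⟩, true)) := by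
        rw [hexp, heq, fam_inr_true c ⟨i', hi'⟩, Fc_eq, mul_sub]
        rw [show (X i' * X 1 : MvPolynomial (Fin (m + 3)) ℂ)
            = monomial (Finsupp.single i' 1 + Finsupp.single 1 1) 1 by
          rw [X, X, monomial_mul]; norm_num]
        rw [smul_sub, monomial_mul, monomial_mul, smul_monomial, smul_monomial]
        norm_num
      rw [this]
      exact Submodule.smul_mem _ _ (Submodule.subset_span ⟨.inr (⟨i', hi'⟩, true), rfl⟩)
    · -- e = single i' 1 + single 0 1
      have heq : e = Finsupp.single i' 1 + Finsupp.single 0 1 := by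
        refine eq_single_add_single hi' (by simp) hei' (by omega) ?_
        intro k hk1 hk2
        rcases fin_cases3 k with rfl | rfl | hk
        · exact absurd rfl hk2
        · omega
        · exact hother k hk hk1
      have : (monomial e) (coeff e g) * Fc m c = coeff e g • fam m c (.inr (⟨i', hi'⟩, false)) := by
        rw [hexp, heq, fam_inr_false c ⟨i', hi'⟩, Fc_eq, mul_sub]
        rw [show (X i' * X 0 : MvPolynomial (Fin (m + 3)) ℂ)
            = monomial (Finsupp.single i' 1 + Finsupp.single 0 1) 1 by
          rw [X, X, monomial_mul]; norm_num]
        rw [smul_sub, monomial_mul, monomial_mul, smul_monomial, smul_monomial]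
        norm_num
      rw [this]
      exact Submodule.smul_mem _ _ (Submodule.subset_span ⟨.inr (⟨i', hi'⟩, false), rfl⟩)

end Stmt8

namespace Stmt8
variable {m : ℕ}

lemma MS_pos {e : Fin (m + 3) →₀ ℕ} (h : ∃ i : Fin (m + 3), 2 ≤ (i : ℕ) ∧ e i ≠ 0) :
    1 ≤ MS e := by
  obtain ⟨i, hi, hei⟩ := h
  rw [MS]
  calc 1 ≤ e i := by omega
  _ ≤ _ := Finset.single_le_sum (fun j _ => Nat.zero_le _) (by simp [hi])

lemma PSet_sub (c : ℂ) : PSet m c ⊆ (Submodule.span ℂ (Set.range (fam m c)) : Set _) := by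
  rintro p ⟨g, hgmem, h, hhmem, rfl⟩
  obtain ⟨hgM, hg2⟩ := Submodule.mem_inf.mp hgmem
  rw [Submodule.restrictScalars_mem] at hgM
  rw [mem_homogeneousSubmodule] at hg2
  obtain ⟨hhK, hh3⟩ := Submodule.mem_inf.mp hhmem
  rw [Submodule.restrictScalars_mem] at hhK
  rw [mem_homogeneousSubmodule] at hh3
  rw [Ideal.span_union, Submodule.mem_sup] at hhK
  obtain ⟨q, hq, w, hw, rfl⟩ := hhK
  obtain ⟨p₁, rfl⟩ := Ideal.mem_span_singleton'.mp hq
  rw [SetLike.mem_coe]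
  have hgh5 : (g * (p₁ * Fc m c + w)).IsHomogeneous 5 := by
    have := hg2.mul hh3
    norm_num at this
    exact this
  have hkey : g * (p₁ * Fc m c + w)
      = homogeneousComponent 5 (g * (p₁ * Fc m c + w)) := by
    rw [homogeneousComponent_of_mem ((mem_homogeneousSubmodule _ _).mpr hgh5), if_pos rfl]
  rw [hkey, mul_add, map_add]
  apply Submodule.add_mem
  · have hassoc : g * (p₁ * Fc m c) = (g * p₁) * Fc m c := by ring
    rw [hassoc, Fc_eq, mul_sub, map_sub,
      HC5_mul_monomial _ _ _ S_E1, HC5_mul_monomial _ _ _ S_E2,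
      HC2_mul p₁ hg2]
    have hrw : g * C (coeff 0 p₁) * (monomial (E1 m)) (1 : ℂ)
        - g * C (coeff 0 p₁) * (monomial (E2 m)) c
        = coeff 0 p₁ • (g * Fc m c) := by
      rw [Fc_eq, smul_eq_C_mul]
      ring
    rw [hrw]
    exact Submodule.smul_mem _ _ (gF_mem c hgM hg2)
  · apply monW_mem
    intro d hd
    have hd5 : S d = 5 := support_S (homogeneousComponent_isHomogeneous 5 (g * w)) hd
    have hdsup : d ∈ (g * w).support := by
      rw [MvPolynomial.mem_support_iff] at hd ⊢
      rw [coeff_homogeneousComponent] at hd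
      split_ifs at hd with hcond
      · exact hd
      · exact absurd rfl hd
    obtain ⟨a, ha, b, hb, rfl⟩ := Finset.mem_add.mp (MvPolynomial.support_mul _ _ hdsup)
    have hSa : S a = 2 := support_S hg2 ha
    have hSab : S (a + b) = S a + S b := S_add a b
    have hMSa : 1 ≤ MS a := MS_pos (mem_MI.mp hgM a ha)
    have hMSb : 1 ≤ MS b := MS_pos (mem_MI.mp hw b hb)
    have hsa := S_split a
    have hsb := S_split b
    refine ⟨by omega, ?_⟩
    rw [Finsupp.add_apply, Finsupp.add_apply]
    omega

lemma span_eq (c : ℂ) :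
    Submodule.span ℂ (PSet m c) = Submodule.span ℂ (Set.range (fam m c)) :=
  le_antisymm (Submodule.span_le.mpr (PSet_sub c))
    (Submodule.span_le.mpr ((range_sub c).trans Submodule.subset_span))

theorem main_aux (m : ℕ) (c : ℂ) :
    Module.finrank ℂ (Submodule.span ℂ (PSet m c)) = (m + 7).choose 5 - 3 * (m + 2) - 3 := by
  rw [span_eq, finrank_span_eq_card (fam_indep c)]
  have h1 := card_Wtype (m := m)
  have h2 : Fintype.card (famI m) = Fintype.card (Wtype m) + (m + 1) * 2 := by
    rw [Fintype.card_sum, Fintype.card_prod, card_Itype, Fintype.card_bool]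
  omega

end Stmt8

theorem stmt_8 (n : ℕ) (hn : 2 ≤ n)
    (F : MvPolynomial (Fin (n + 1)) ℂ)
    (hF : F = X 0 ^ 2 * X 1 - X 0 * X 1 ^ 2 ∨ F = X 0 ^ 2 * X 1)
    (M K : Ideal (MvPolynomial (Fin (n + 1)) ℂ))
    (hM : M = Ideal.span {p : MvPolynomial (Fin (n + 1)) ℂ | ∃ i : Fin (n + 1), 2 ≤ (i : ℕ) ∧ p = X i})
    (hK : K = Ideal.span
      ({F} ∪ {p : MvPolynomial (Fin (n + 1)) ℂ | ∃ i : Fin (n + 1), 2 ≤ (i : ℕ) ∧ p = X i})) :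
    Module.finrank ℂ
        ↥(Submodule.span ℂ
          {p : MvPolynomial (Fin (n + 1)) ℂ |
            ∃ g ∈ Submodule.restrictScalars ℂ M ⊓ homogeneousSubmodule (Fin (n + 1)) ℂ 2,
            ∃ h ∈ Submodule.restrictScalars ℂ K ⊓ homogeneousSubmodule (Fin (n + 1)) ℂ 3,
            p = g * h}) = Nat.choose (n + 5) 5 - 3 * n - 3 := by
  obtain ⟨m, rfl⟩ : ∃ m, n = m + 2 := ⟨n - 2, by omega⟩
  obtain ⟨c, hc⟩ : ∃ c : ℂ, F = Stmt8.Fc m c := by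
    rcases hF with h | h
    · exact ⟨1, by rw [h, Stmt8.Fc]; norm_num⟩
    · exact ⟨0, by rw [h, Stmt8.Fc]; norm_num⟩
  subst hM hK hc
  have hmain := Stmt8.main_aux m c
  rw [show m + 2 + 5 = m + 7 by omega]
  exact hmain
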